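/- Let G be a connected topological group acting continuously and effectively (faithfully) on a connected, locally path-connected, semilocally simply connected space M, with universal cover M̃ and lifted action of G̃. If g̃ ∈ G̃ acts trivially on M̃, then g̃ lies in π₁(G,e) ⊂ G̃ and a_{z₀}(g̃) is trivial; conversely every element of ker(a_{z₀}) ⊂ π₁(G,e) acts trivially on M̃. Hence the kernel of the G̃-action on M̃ equals ker(a_{z₀}). -/

import Mathlib

/-- The path `t ↦ g t • z t`: the lifted action of a path of group elements starting at
the identity on a path in `M`. -/
def actPath {G M : Type*} [TopologicalSpace G] [Group G] [IsTopologicalGroup G]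
    [TopologicalSpace M] [MulAction G M] [ContinuousSMul G M]
    {g₁ : G} (g : Path (1 : G) g₁) {z₀ z₁ : M} (z : Path z₀ z₁) : Path z₀ (g₁ • z₁) where
  toFun := fun t => g t • z t
  continuous_toFun := by continuity
  source' := by simp
  target' := by simp

private instance contractibleII : ContractibleSpace (unitInterval × unitInterval) := by
  have h : Convex ℝ (Set.Icc (0:ℝ) 1 ×ˢ Set.Icc (0:ℝ) 1) :=
    (convex_Icc 0 1).prod (convex_Icc 0 1)
  have : ContractibleSpace ↥(Set.Icc (0:ℝ) 1 ×ˢ Set.Icc (0:ℝ) 1) :=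
    h.contractibleSpace ⟨(0,0), by simp⟩
  exact (Homeomorph.Set.prod _ _).symm.contractibleSpace

private lemma homotopic_cast {M : Type*} [TopologicalSpace M] {a b a' b' : M}
    (p q : Path a b) (ha : a' = a) (hb : b' = b) (h : Path.Homotopic p q) :
    Path.Homotopic (p.cast ha hb) (q.cast ha hb) := by
  subst ha; subst hb
  have hp : p.cast rfl rfl = p := by ext t; rfl
  have hq : q.cast rfl rfl = q := by ext t; rfl
  rwa [hp, hq]


private lemma path_cast_trans {M : Type*} [TopologicalSpace M] {a b c a' b' c' : M}
    (p : Path a b) (q : Path b c) (ha : a' = a) (hb : b' = b) (hc : c' = c) :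
    (p.trans q).cast ha hc = (p.cast ha hb).trans (q.cast hb hc) := by
  subst ha; subst hb; subst hc
  ext t; rfl

private def pDiag {M : Type*} [TopologicalSpace M] (f : C(unitInterval × unitInterval, M)) :
    Path (f (0,0)) (f (1,1)) :=
  ⟨⟨fun t => f (t, t), f.continuous.comp (continuous_id.prodMk continuous_id)⟩, rfl, rfl⟩

private def pLeft {M : Type*} [TopologicalSpace M] (f : C(unitInterval × unitInterval, M)) :
    Path (f (0,0)) (f (1,0)) :=
  ⟨⟨fun t => f (t, 0), f.continuous.comp (continuous_id.prodMk continuous_const)⟩, rfl, rfl⟩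

private def pTop {M : Type*} [TopologicalSpace M] (f : C(unitInterval × unitInterval, M)) :
    Path (f (1,0)) (f (1,1)) :=
  ⟨⟨fun t => f (1, t), f.continuous.comp (continuous_const.prodMk continuous_id)⟩, rfl, rfl⟩

private lemma diag_homotopic {M : Type*} [TopologicalSpace M]
    (f : C(unitInterval × unitInterval, M)) :
    Path.Homotopic
      (pDiag f)
      ((pLeft f).trans
        (pTop f)) := by
  let diag : Path ((0,0) : unitInterval × unitInterval) (1,1) :=
    ⟨⟨fun t => (t, t), continuous_id.prodMk continuous_id⟩, rfl, rfl⟩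
  let left : Path ((0,0) : unitInterval × unitInterval) (1,0) :=
    ⟨⟨fun t => (t, (0:unitInterval)), continuous_id.prodMk continuous_const⟩, rfl, rfl⟩
  let top : Path ((1,0) : unitInterval × unitInterval) (1,1) :=
    ⟨⟨fun t => ((1:unitInterval), t), continuous_const.prodMk continuous_id⟩, rfl, rfl⟩
  have hh : Path.Homotopic diag (left.trans top) :=
    (simply_connected_iff_paths_homotopic'.mp inferInstance).2 _ _
  have hmap := hh.map f
  have e1 : diag.map f.continuous =
      (pDiag f) := by
    ext t; rfl
  have e2 : (left.trans top).map f.continuous =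
      ((pLeft f).trans
        (pTop f)) := by
    have eL : left.map f.continuous = pLeft f := by ext t; rfl
    have eT : top.map f.continuous = pTop f := by ext t; rfl
    rw [Path.map_trans, eL, eT]
  rwa [e1, e2] at hmap


/-- for an effective action of a connected group `G` on `M`, an element
`g̃` of `G̃` (represented by a path `g` from the identity to `g₁`) acts trivially on the
universal cover `M̃` (i.e. for every path `z` from `z₀`, the class of `t ↦ g t • z t`
equals the class of `z`) if and only if `g̃ ∈ π₁(G,e)` (i.e. `g₁ = 1`) and
`a_{z₀}(g̃)` is the trivial class (the loop `t ↦ g t • z₀` is null-homotopic).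
Hence the kernel of the `G̃`-action on `M̃` equals `ker a_{z₀}`. -/
theorem stmt6 {G M : Type*} [TopologicalSpace G] [Group G] [IsTopologicalGroup G]
    [ConnectedSpace G] [TopologicalSpace M] [ConnectedSpace M] [LocallyPathConnectedSpace M]
    [MulAction G M] [ContinuousSMul G M] (z₀ : M)
    (hsemiloc : ∀ x : M, ∃ U ∈ nhds x, ∀ δ : Path x x,
      (∀ t, δ t ∈ U) → Path.Homotopic δ (Path.refl x))
    (heff : ∀ g : G, (∀ m : M, g • m = m) → g = 1) :
    ∀ {g₁ : G} (g : Path (1 : G) g₁),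
      (∀ {z₁ : M} (z : Path z₀ z₁), ∃ h : g₁ • z₁ = z₁,
          Path.Homotopic ((actPath g z).cast rfl h.symm) z) ↔
      (∃ h : g₁ = 1,
          Path.Homotopic ((actPath g (Path.refl z₀)).cast rfl (by rw [h, one_smul]))
            (Path.refl z₀)) := by
  intro g₁ g
  constructor
  · intro H
    have hpc : PathConnectedSpace M := by
      rw [pathConnectedSpace_iff_connectedSpace]; infer_instance
    have h1 : g₁ = 1 := by
      apply heff
      intro m
      obtain ⟨h, -⟩ := H (hpc.somePath z₀ m)
      simpa using h
    refine ⟨h1, ?_⟩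
    obtain ⟨h, hh⟩ := H (Path.refl z₀)
    exact hh
  · rintro ⟨h1, hloop⟩
    subst h1
    intro z₁ z
    refine ⟨one_smul G z₁, ?_⟩
    let f : C(unitInterval × unitInterval, M) :=
      ⟨fun p => g p.1 • z p.2,
        (g.continuous.comp continuous_fst).smul (z.continuous.comp continuous_snd)⟩
    have hsq := diag_homotopic f
    have h00 : z₀ = f (0, 0) := by
      show z₀ = g 0 • z 0
      rw [g.source, one_smul, z.source]
    have h10 : z₀ = f (1, 0) := by
      show z₀ = g 1 • z 0
      rw [g.target, one_smul, z.source]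
    have h11 : z₁ = f (1, 1) := by
      show z₁ = g 1 • z 1
      rw [g.target, one_smul, z.target]
    have hsq' := homotopic_cast _ _ h00 h11 hsq
    have eD : (pDiag f).cast h00 h11 = (actPath g z).cast rfl (one_smul G z₁).symm := by
      ext t; rfl
    rw [eD, path_cast_trans (pLeft f) (pTop f) h00 h10 h11] at hsq'
    have eγ : (pLeft f).cast h00 h10 =
        (actPath g (Path.refl z₀)).cast rfl (by rw [one_smul]) := by
      ext t
      show g t • z 0 = g t • z₀
      rw [z.source]
    have eT : (pTop f).cast h10 h11 = z := by
      ext t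
      show g 1 • z t = z t
      rw [g.target, one_smul]
    rw [eγ, eT] at hsq'
    refine hsq'.trans ?_
    refine (Path.Homotopic.hcomp hloop (Path.Homotopic.refl z)).trans ?_
    exact ⟨Path.Homotopy.reflTrans z⟩
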